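/- For nonzero PSD matrices K_X, K_Y ∈ ℝ^{M×M}: 1 − NBS(K_X,K_Y) ≤ 1 − CKA(K_X^{1/2}, K_Y^{1/2}) ≤ √(1 − NBS(K_X,K_Y)²). -/

import Mathlib

open Matrix

/-- The positive semidefinite square root of a positive semidefinite matrix
(as `Matrix.PosSemidef.sqrt` was defined in the older Mathlib). -/
noncomputable def Matrix.PosSemidef.sqrt {n : Type*} [Fintype n] [DecidableEq n]
    {A : Matrix n n ℝ} (hA : A.PosSemidef) : Matrix n n ℝ :=
  hA.1.eigenvectorUnitary.1 * diagonal (Real.sqrt ∘ hA.1.eigenvalues) *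
    (star hA.1.eigenvectorUnitary : Matrix n n ℝ)

lemma Matrix.PosSemidef.posSemidef_sqrt {n : Type*} [Fintype n] [DecidableEq n]
    {A : Matrix n n ℝ} (hA : A.PosSemidef) : hA.sqrt.PosSemidef := by
  apply PosSemidef.mul_mul_conjTranspose_same
  refine posSemidef_diagonal_iff.mpr fun i => ?_
  exact Real.sqrt_nonneg _

lemma real_conjTranspose_eq {m n : ℕ} (A : Matrix (Fin m) (Fin n) ℝ) : Aᴴ = Aᵀ := rfl

lemma psd_tmul {m n : ℕ} (A : Matrix (Fin m) (Fin n) ℝ) : (Aᵀ * A).PosSemidef := by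
  have h := Matrix.posSemidef_conjTranspose_mul_self A
  rwa [real_conjTranspose_eq] at h

lemma psd_gram {m n : ℕ} (A : Matrix (Fin m) (Fin n) ℝ) : (A * Aᵀ).PosSemidef := by
  have h := Matrix.posSemidef_self_mul_conjTranspose A
  rwa [real_conjTranspose_eq] at h

lemma psd_sand {M : ℕ} {Kx Ky : Matrix (Fin M) (Fin M) ℝ} (hx : Kx.PosSemidef) (hy : Ky.PosSemidef) :
    (hx.sqrt * Ky * hx.sqrt).PosSemidef := by
  have h := hy.mul_mul_conjTranspose_same hx.sqrt
  rwa [hx.posSemidef_sqrt.isHermitian.eq] at h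

/-- Nuclear norm: sum of singular values, i.e. `Tr[(AᵀA)^{1/2}]`. -/
noncomputable def nuclearNorm {m n : ℕ} (A : Matrix (Fin m) (Fin n) ℝ) : ℝ :=
  (Matrix.PosSemidef.sqrt (psd_tmul A)).trace

/-- Frobenius norm. -/
noncomputable def frobNorm {m n : ℕ} (A : Matrix (Fin m) (Fin n) ℝ) : ℝ :=
  Real.sqrt (Matrix.trace (Aᵀ * A))

/-- Fidelity `Tr[(Kx^{1/2} Ky Kx^{1/2})^{1/2}]` between PSD matrices. -/
noncomputable def fidelity {M : ℕ} {Kx Ky : Matrix (Fin M) (Fin M) ℝ}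
    (hx : Kx.PosSemidef) (hy : Ky.PosSemidef) : ℝ :=
  (Matrix.PosSemidef.sqrt (psd_sand hx hy)).trace

lemma Matrix.PosSemidef.sqrt_mul_self {n : Type*} [Fintype n] [DecidableEq n]
    {A : Matrix n n ℝ} (hA : A.PosSemidef) : hA.sqrt * hA.sqrt = A := by
  have hs := hA.1.spectral_theorem
  rw [Unitary.conjStarAlgAut_apply] at hs
  unfold Matrix.PosSemidef.sqrt
  calc hA.1.eigenvectorUnitary.1 * diagonal (Real.sqrt ∘ hA.1.eigenvalues) *
        (star hA.1.eigenvectorUnitary : Matrix n n ℝ) *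
        (hA.1.eigenvectorUnitary.1 * diagonal (Real.sqrt ∘ hA.1.eigenvalues) *
        (star hA.1.eigenvectorUnitary : Matrix n n ℝ))
      = hA.1.eigenvectorUnitary.1 * (diagonal (Real.sqrt ∘ hA.1.eigenvalues) *
        ((star hA.1.eigenvectorUnitary : Matrix n n ℝ) * hA.1.eigenvectorUnitary.1) *
        diagonal (Real.sqrt ∘ hA.1.eigenvalues)) *
        (star hA.1.eigenvectorUnitary : Matrix n n ℝ) := by simp only [Matrix.mul_assoc]
    _ = hA.1.eigenvectorUnitary.1 * diagonal hA.1.eigenvalues *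
        (star hA.1.eigenvectorUnitary : Matrix n n ℝ) := by
      rw [Unitary.coe_star_mul_self, Matrix.mul_one, diagonal_mul_diagonal]
      congr 3
      funext i
      exact Real.mul_self_sqrt (hA.eigenvalues_nonneg i)
    _ = A := hs.symm


open Matrix

variable {N : ℕ}

local notation "Mat" => Matrix (Fin N) (Fin N) ℝ

lemma trace_tmul_sum (X Y : Mat) :
    Matrix.trace (Xᵀ * Y) = ∑ p : Fin N × Fin N, X p.1 p.2 * Y p.1 p.2 := by
  rw [Matrix.trace, Fintype.sum_prod_type]
  simp only [Matrix.diag, Matrix.mul_apply, Matrix.transpose_apply]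
  exact Finset.sum_comm

lemma trace_CS (X Y : Mat) :
    Matrix.trace (Xᵀ * Y) ≤
      Real.sqrt (Matrix.trace (Xᵀ * X)) * Real.sqrt (Matrix.trace (Yᵀ * Y)) := by
  have h := Finset.sum_mul_sq_le_sq_mul_sq Finset.univ
    (fun p : Fin N × Fin N => X p.1 p.2) (fun p : Fin N × Fin N => Y p.1 p.2)
  have hx : Matrix.trace (Xᵀ * X) = ∑ p : Fin N × Fin N, X p.1 p.2 ^ 2 := by
    rw [trace_tmul_sum]; simp [sq]
  have hy : Matrix.trace (Yᵀ * Y) = ∑ p : Fin N × Fin N, Y p.1 p.2 ^ 2 := by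
    rw [trace_tmul_sum]; simp [sq]
  rw [trace_tmul_sum, hx, hy]
  calc (∑ p : Fin N × Fin N, X p.1 p.2 * Y p.1 p.2)
      ≤ Real.sqrt ((∑ p : Fin N × Fin N, X p.1 p.2 * Y p.1 p.2) ^ 2) := by
        rw [Real.sqrt_sq_eq_abs]; exact le_abs_self _
    _ ≤ Real.sqrt ((∑ p : Fin N × Fin N, X p.1 p.2 ^ 2) * ∑ p : Fin N × Fin N, Y p.1 p.2 ^ 2) :=
        Real.sqrt_le_sqrt h
    _ = _ := Real.sqrt_mul (by positivity) _

lemma psd_trace_nonneg {P : Mat} (hP : P.PosSemidef) : 0 ≤ P.trace := by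
  have hC : hP.sqrt * hP.sqrt = P := hP.sqrt_mul_self
  have hCt : (hP.sqrt)ᵀ = hP.sqrt := hP.posSemidef_sqrt.isHermitian
  have h := trace_tmul_sum hP.sqrt hP.sqrt
  rw [hCt, hC] at h
  rw [h]
  exact Finset.sum_nonneg fun p _ => mul_self_nonneg _

lemma psd_mul_trace_nonneg {P Q : Mat} (hP : P.PosSemidef) (hQ : Q.PosSemidef) :
    0 ≤ (P * Q).trace := by
  have hC : hP.sqrt * hP.sqrt = P := hP.sqrt_mul_self
  have hCt : (hP.sqrt)ᴴ = hP.sqrt := hP.posSemidef_sqrt.isHermitian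
  have h1 : (hP.sqrt * Q * hP.sqrt).trace = (P * Q).trace := by
    rw [Matrix.mul_assoc, Matrix.trace_mul_comm, Matrix.mul_assoc, hC, Matrix.trace_mul_comm]
  rw [← h1]
  have := hQ.mul_mul_conjTranspose_same hP.sqrt
  rw [hCt] at this
  exact psd_trace_nonneg this

lemma psd_smul' {P : Mat} (hP : P.PosSemidef) {c : ℝ} (hc : 0 ≤ c) :
    (c • P).PosSemidef := by
  refine ⟨?_, fun x => ?_⟩
  · unfold Matrix.IsHermitian
    rw [Matrix.conjTranspose_smul, hP.1.eq, star_trivial]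
  · exact (hP.smul hc).2 x

lemma psd_conj_diag (V : Mat) (d : Fin N → ℝ) (hd : ∀ i, 0 ≤ d i) :
    (V * Matrix.diagonal d * Vᵀ).PosSemidef := by
  have e : (Matrix.diagonal fun i => Real.sqrt (d i)) * (Matrix.diagonal fun i => Real.sqrt (d i))
      = Matrix.diagonal d := by
    rw [Matrix.diagonal_mul_diagonal]
    exact congrArg Matrix.diagonal (funext fun i => Real.mul_self_sqrt (hd i))
  have key : V * Matrix.diagonal d * Vᵀ =
      (V * Matrix.diagonal fun i => Real.sqrt (d i)) *
        (V * Matrix.diagonal fun i => Real.sqrt (d i))ᵀ := by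
    calc V * Matrix.diagonal d * Vᵀ
        = V * ((Matrix.diagonal fun i => Real.sqrt (d i)) *
            (Matrix.diagonal fun i => Real.sqrt (d i))) * Vᵀ := by rw [e]
      _ = (V * Matrix.diagonal fun i => Real.sqrt (d i)) *
            ((Matrix.diagonal fun i => Real.sqrt (d i)) * Vᵀ) := by
          simp only [Matrix.mul_assoc]
      _ = (V * Matrix.diagonal fun i => Real.sqrt (d i)) *
            (V * Matrix.diagonal fun i => Real.sqrt (d i))ᵀ := by
          rw [Matrix.transpose_mul, Matrix.diagonal_transpose]
  rw [key]
  exact psd_gram _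
lemma abs_decomp {Δ : Mat} (hΔ : Δ.IsHermitian) :
    ∃ W T : Mat, Wᵀ = W ∧ W * W = 1 ∧ W * Δ = T ∧ Δ * W = T ∧
      (T - Δ).PosSemidef ∧ (T + Δ).PosSemidef := by
  classical
  set V : Mat := (hΔ.eigenvectorUnitary : Mat) with hV
  have hV1 : Vᵀ * V = 1 := by
    have := (Matrix.mem_unitaryGroup_iff').mp hΔ.eigenvectorUnitary.2
    rwa [Matrix.star_eq_conjTranspose] at this
  have hV2 : V * Vᵀ = 1 := by
    have := (Matrix.mem_unitaryGroup_iff).mp hΔ.eigenvectorUnitary.2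
    rwa [Matrix.star_eq_conjTranspose] at this
  set lam : Fin N → ℝ := hΔ.eigenvalues with hlam
  have hspec : Δ = V * Matrix.diagonal lam * Vᵀ := by
    have := hΔ.spectral_theorem
    rwa [Unitary.conjStarAlgAut_apply, Matrix.star_eq_conjTranspose, show (RCLike.ofReal ∘ hΔ.eigenvalues : Fin N → ℝ) =
      hΔ.eigenvalues from funext fun i => rfl] at this
  -- conjugation by V of diagonal matrices multiplies nicely
  have hmul : ∀ f g : Fin N → ℝ,
      (V * Matrix.diagonal f * Vᵀ) * (V * Matrix.diagonal g * Vᵀ)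
        = V * Matrix.diagonal (fun i => f i * g i) * Vᵀ := by
    intro f g
    calc (V * Matrix.diagonal f * Vᵀ) * (V * Matrix.diagonal g * Vᵀ)
        = V * Matrix.diagonal f * (Vᵀ * V) * (Matrix.diagonal g * Vᵀ) := by
          simp only [Matrix.mul_assoc]
      _ = V * (Matrix.diagonal f * Matrix.diagonal g) * Vᵀ := by
          rw [hV1, Matrix.mul_one]
          simp only [Matrix.mul_assoc]
      _ = V * Matrix.diagonal (fun i => f i * g i) * Vᵀ := by
          rw [Matrix.diagonal_mul_diagonal]
  have htrans : ∀ f : Fin N → ℝ, (V * Matrix.diagonal f * Vᵀ)ᵀ = V * Matrix.diagonal f * Vᵀ := by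
    intro f
    rw [Matrix.transpose_mul, Matrix.transpose_mul, Matrix.diagonal_transpose,
      Matrix.transpose_transpose, Matrix.mul_assoc]
  set sgn : ℝ → ℝ := fun x => if x < 0 then -1 else 1 with hsgn
  refine ⟨V * Matrix.diagonal (fun i => sgn (lam i)) * Vᵀ,
    V * Matrix.diagonal (fun i => |lam i|) * Vᵀ, htrans _, ?_, ?_, ?_, ?_, ?_⟩
  · rw [hmul]
    have : (fun i => sgn (lam i) * sgn (lam i)) = fun _ => (1 : ℝ) := by
      funext i; simp only [hsgn]; split <;> norm_num
    rw [this, Matrix.diagonal_one, Matrix.mul_one, hV2]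
  · have habs : (fun i => sgn (lam i) * lam i) = fun i => |lam i| := by
      funext i
      by_cases h : lam i < 0
      · simp only [hsgn, if_pos h]; rw [abs_of_neg h]; ring
      · simp only [hsgn, if_neg h]; rw [abs_of_nonneg (not_lt.mp h)]; ring
    rw [hspec, hmul, habs]
  · have habs : (fun i => lam i * sgn (lam i)) = fun i => |lam i| := by
      funext i
      by_cases h : lam i < 0
      · simp only [hsgn, if_pos h]; rw [abs_of_neg h]; ring
      · simp only [hsgn, if_neg h]; rw [abs_of_nonneg (not_lt.mp h)]; ring
    rw [hspec, hmul, habs]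
  · rw [hspec]
    have : V * Matrix.diagonal (fun i => |lam i| - lam i) * Vᵀ
        = V * Matrix.diagonal (fun i => |lam i|) * Vᵀ - V * Matrix.diagonal lam * Vᵀ := by
      rw [← Matrix.diagonal_sub, Matrix.mul_sub, Matrix.sub_mul]
    rw [← this]
    exact psd_conj_diag V _ fun i => by simp [abs_nonneg, neg_le_abs, sub_nonneg, le_abs_self]
  · rw [hspec]
    have : V * Matrix.diagonal (fun i => |lam i| + lam i) * Vᵀ
        = V * Matrix.diagonal (fun i => |lam i|) * Vᵀ + V * Matrix.diagonal lam * Vᵀ := by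
      rw [← Matrix.diagonal_add, Matrix.mul_add, Matrix.add_mul]
    rw [← this]
    exact psd_conj_diag V _ fun i => by
      have := neg_abs_le (lam i); linarith [le_abs_self (lam i), abs_nonneg (lam i)]
lemma toEuclideanLin_mul' (A B : Mat) :
    Matrix.toEuclideanLin (A * B) =
      (Matrix.toEuclideanLin A).comp (Matrix.toEuclideanLin B) := by
  apply LinearMap.ext
  intro x
  simp [Matrix.toEuclideanLin_apply, Matrix.mulVec_mulVec]

lemma dot_mulVec_mulVec (A : Mat) (v w : Fin N → ℝ) :
    (A *ᵥ v) ⬝ᵥ (A *ᵥ w) = v ⬝ᵥ ((Aᵀ * A) *ᵥ w) := by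
  rw [← Matrix.mulVec_mulVec, Matrix.dotProduct_mulVec (v := v), Matrix.vecMul_transpose]

lemma inner_toEuclideanLin (A : Mat) (v w : Fin N → ℝ) :
    (inner ℝ (Matrix.toEuclideanLin A ((WithLp.equiv 2 _).symm v))
      (Matrix.toEuclideanLin A ((WithLp.equiv 2 _).symm w)) : ℝ)
      = (A *ᵥ v) ⬝ᵥ (A *ᵥ w) := by
  rw [EuclideanSpace.inner_eq_star_dotProduct]
  simp only [Matrix.ofLp_toEuclideanLin_apply, Equiv.apply_symm_apply, star_trivial]
  exact dotProduct_comm _ _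

lemma polar_decomp (M0 : Mat) :
    ∃ U : Mat, Uᵀ * U = 1 ∧ U * Uᵀ = 1 ∧ M0 = U * (psd_tmul M0).sqrt := by
  classical
  set P : Mat := (psd_tmul M0).sqrt with hPdef
  have hPP : P * P = M0ᵀ * M0 := (psd_tmul M0).sqrt_mul_self
  have hPt : Pᵀ = P := (psd_tmul M0).posSemidef_sqrt.isHermitian
  set f := Matrix.toEuclideanLin M0 with hf
  set p := Matrix.toEuclideanLin P with hp
  have hnorm : ∀ x, ‖p x‖ = ‖f x‖ := by
    intro x
    have h2 : (inner ℝ (p x) (p x) : ℝ) = inner ℝ (f x) (f x) := by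
      have hx : x = (WithLp.equiv 2 _).symm ((WithLp.equiv 2 _) x) := rfl
      rw [hx, hp, hf, inner_toEuclideanLin, inner_toEuclideanLin,
        dot_mulVec_mulVec, dot_mulVec_mulVec, hPt, hPP]
    have := congrArg Real.sqrt h2
    rwa [real_inner_self_eq_norm_sq, real_inner_self_eq_norm_sq,
      Real.sqrt_sq (norm_nonneg _), Real.sqrt_sq (norm_nonneg _)] at this
  have hker : LinearMap.ker p ≤ LinearMap.ker f := by
    intro x hx
    rw [LinearMap.mem_ker] at hx ⊢
    have := hnorm x
    rw [hx, norm_zero] at this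
    exact norm_eq_zero.mp this.symm
  set g : ↥(LinearMap.range p) →ₗ[ℝ] EuclideanSpace ℝ (Fin N) :=
    ((LinearMap.ker p).liftQ f hker).comp (p.quotKerEquivRange.symm.toLinearMap) with hgdef
  have hg : ∀ (x : EuclideanSpace ℝ (Fin N)) (h : p x ∈ LinearMap.range p),
      g ⟨p x, h⟩ = f x := by
    intro x h
    rw [hgdef]
    simp only [LinearMap.comp_apply, LinearEquiv.coe_toLinearMap]
    rw [LinearMap.quotKerEquivRange_symm_apply_image p x h, Submodule.mkQ_apply,
      Submodule.liftQ_apply]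
  set L : ↥(LinearMap.range p) →ₗᵢ[ℝ] EuclideanSpace ℝ (Fin N) :=
    { toLinearMap := g
      norm_map' := by
        rintro ⟨y, hy⟩
        obtain ⟨x, rfl⟩ := hy
        exact (congrArg norm (hg x _)).trans (hnorm x).symm } with hLdef
  set Uiso := L.extend with hUisodef
  have hUiso : ∀ x, Uiso (p x) = f x := by
    intro x
    have h1 := L.extend_apply ⟨p x, LinearMap.mem_range_self p x⟩
    have h2 : L ⟨p x, LinearMap.mem_range_self p x⟩ = f x := hg x _
    rw [← hUisodef] at h1
    exact h1.trans h2
  set U : Mat := Matrix.toEuclideanLin.symm Uiso.toLinearMap with hUdef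
  have hU : Matrix.toEuclideanLin U = Uiso.toLinearMap := by
    rw [hUdef]; exact Matrix.toEuclideanLin.apply_symm_apply _
  have hMUP : M0 = U * P := by
    apply Matrix.toEuclideanLin.injective
    rw [toEuclideanLin_mul', hU]
    apply LinearMap.ext
    intro x
    exact (hUiso x).symm
  have hUtU : Uᵀ * U = 1 := by
    have key : ∀ v w : Fin N → ℝ, v ⬝ᵥ ((Uᵀ * U) *ᵥ w) = v ⬝ᵥ w := by
      intro v w
      rw [← dot_mulVec_mulVec]
      have h3 := inner_toEuclideanLin U v w
      rw [hU] at h3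
      simp only [LinearIsometry.coe_toLinearMap] at h3
      have h4 := Uiso.inner_map_map ((WithLp.equiv 2 _).symm v) ((WithLp.equiv 2 _).symm w)
      have h5 : (inner ℝ ((WithLp.equiv 2 (Fin N → ℝ)).symm v)
          ((WithLp.equiv 2 (Fin N → ℝ)).symm w) : ℝ) = v ⬝ᵥ w := by
        rw [EuclideanSpace.inner_eq_star_dotProduct, star_trivial]
        exact dotProduct_comm _ _
      rw [← h3, h4, h5]
    apply Matrix.ext
    intro i j
    have := key (Pi.single i 1) (Pi.single j 1)
    rw [single_dotProduct, single_dotProduct, Matrix.mulVec_single] at this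
    simpa [Matrix.one_apply, Pi.single_apply, eq_comm] using this
  exact ⟨U, hUtU, mul_eq_one_comm.mp hUtU, hMUP⟩
lemma nuclearNorm_nonneg' (M0 : Mat) : 0 ≤ nuclearNorm M0 :=
  psd_trace_nonneg (psd_tmul M0).posSemidef_sqrt

lemma trace_mul_le_nuclear (A B : Mat) :
    Matrix.trace (A * B) ≤ nuclearNorm (B * A) := by
  obtain ⟨U, hU1, hU2, hM⟩ := polar_decomp (B * A)
  set P : Mat := (psd_tmul (B * A)).sqrt with hPdef
  have hPpsd : P.PosSemidef := (psd_tmul (B * A)).posSemidef_sqrt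
  have hnn : nuclearNorm (B * A) = P.trace := rfl
  set C : Mat := hPpsd.sqrt with hCdef
  have hCC : C * C = P := hPpsd.sqrt_mul_self
  have hCt : Cᵀ = C := hPpsd.posSemidef_sqrt.isHermitian
  have h1 : Matrix.trace (A * B) = Matrix.trace (Cᵀ * (U * C)) := by
    rw [Matrix.trace_mul_comm, hM, hCt, ← hCC, ← Matrix.mul_assoc,
      Matrix.trace_mul_comm (U * C) C]
  have h2 : Matrix.trace (Cᵀ * C) = P.trace := by rw [hCt, hCC]
  have h3 : Matrix.trace ((U * C)ᵀ * (U * C)) = P.trace := by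
    rw [Matrix.transpose_mul, Matrix.mul_assoc, ← Matrix.mul_assoc Uᵀ U C, hU1,
      Matrix.one_mul, hCt, hCC]
  calc Matrix.trace (A * B) = Matrix.trace (Cᵀ * (U * C)) := h1
    _ ≤ Real.sqrt (Matrix.trace (Cᵀ * C)) * Real.sqrt (Matrix.trace ((U * C)ᵀ * (U * C))) :=
        trace_CS _ _
    _ = Real.sqrt P.trace * Real.sqrt P.trace := by rw [h2, h3]
    _ = P.trace := Real.mul_self_sqrt (psd_trace_nonneg hPpsd)
    _ = nuclearNorm (B * A) := hnn.symm

lemma nuclear_le_frob_mul (A B : Mat) (hA : A.PosSemidef) (hB : B.PosSemidef) :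
    nuclearNorm (B * A) ≤
      Real.sqrt (Matrix.trace (A * A)) * Real.sqrt (Matrix.trace (B * B)) := by
  obtain ⟨U, hU1, hU2, hM⟩ := polar_decomp (B * A)
  set P : Mat := (psd_tmul (B * A)).sqrt with hPdef
  have hnn : nuclearNorm (B * A) = P.trace := rfl
  have hAt : Aᵀ = A := hA.1
  have hBt : Bᵀ = B := hB.1
  have h1 : P.trace = Matrix.trace (Aᵀ * (Uᵀ * B)) := by
    rw [hAt]
    have : Matrix.trace (A * (Uᵀ * B)) = Matrix.trace (Uᵀ * (B * A)) := by
      rw [Matrix.trace_mul_comm, Matrix.mul_assoc]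
    rw [this, hM, ← Matrix.mul_assoc, hU1, Matrix.one_mul]
  have h2 : Matrix.trace (Aᵀ * A) = Matrix.trace (A * A) := by rw [hAt]
  have h3 : Matrix.trace ((Uᵀ * B)ᵀ * (Uᵀ * B)) = Matrix.trace (B * B) := by
    rw [Matrix.transpose_mul, Matrix.transpose_transpose, hBt, Matrix.mul_assoc,
      ← Matrix.mul_assoc U Uᵀ B, hU2, Matrix.one_mul]
  calc nuclearNorm (B * A) = Matrix.trace (Aᵀ * (Uᵀ * B)) := by rw [hnn, h1]
    _ ≤ Real.sqrt (Matrix.trace (Aᵀ * A)) * Real.sqrt (Matrix.trace ((Uᵀ * B)ᵀ * (Uᵀ * B))) :=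
        trace_CS _ _
    _ = _ := by rw [h2, h3]

lemma core_ineq (A B : Mat) (hA : A.PosSemidef) (hB : B.PosSemidef) :
    Matrix.trace (A * A) + Matrix.trace (B * B) - 2 * Matrix.trace (A * B) ≤
      Real.sqrt (Matrix.trace (A * A) + Matrix.trace (B * B) - 2 * nuclearNorm (B * A)) *
        Real.sqrt (Matrix.trace (A * A) + Matrix.trace (B * B) + 2 * nuclearNorm (B * A)) := by
  obtain ⟨U, hU1, hU2, hM⟩ := polar_decomp (B * A)
  set P : Mat := (psd_tmul (B * A)).sqrt with hPdef
  have hnn : nuclearNorm (B * A) = P.trace := rfl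
  set X : Mat := Uᵀ * B with hXdef
  have hAt : Aᵀ = A := hA.1
  have hBt : Bᵀ = B := hB.1
  have hXt : Xᵀ = B * U := by
    rw [hXdef, Matrix.transpose_mul, Matrix.transpose_transpose, hBt]
  have hXX : Xᵀ * X = B * B := by
    rw [hXt, hXdef, Matrix.mul_assoc, ← Matrix.mul_assoc U Uᵀ B, hU2, Matrix.one_mul]
  have hAX : Matrix.trace (A * X) = P.trace := by
    rw [hXdef, Matrix.trace_mul_comm, Matrix.mul_assoc, hM, ← Matrix.mul_assoc, hU1,
      Matrix.one_mul]
  have hXA : Matrix.trace (Xᵀ * A) = P.trace := by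
    have e : (Xᵀ * A)ᵀ = A * X := by
      rw [Matrix.transpose_mul, Matrix.transpose_transpose, hAt]
    rw [← Matrix.trace_transpose (Xᵀ * A), e, hAX]
  have hDmat : (A - X)ᵀ = A - Xᵀ := by rw [Matrix.transpose_sub, hAt]
  have hSmat : (A + X)ᵀ = A + Xᵀ := by rw [Matrix.transpose_add, hAt]
  -- trace computations
  have tDel : Matrix.trace ((A - B) * (A - B)) =
      Matrix.trace (A * A) + Matrix.trace (B * B) - 2 * Matrix.trace (A * B) := by
    have e : (A - B) * (A - B) = (A * A + B * B) - (A * B + B * A) := by noncomm_ring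
    rw [e, Matrix.trace_sub, Matrix.trace_add, Matrix.trace_add, Matrix.trace_mul_comm B A]
    ring
  have tD : Matrix.trace ((A - X)ᵀ * (A - X)) =
      Matrix.trace (A * A) + Matrix.trace (B * B) - 2 * P.trace := by
    rw [hDmat]
    have e : (A - Xᵀ) * (A - X) = (A * A + Xᵀ * X) - (A * X + Xᵀ * A) := by noncomm_ring
    rw [e, hXX, Matrix.trace_sub, Matrix.trace_add, Matrix.trace_add, hAX, hXA]
    ring
  have tS : Matrix.trace ((A + X)ᵀ * (A + X)) =
      Matrix.trace (A * A) + Matrix.trace (B * B) + 2 * P.trace := by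
    rw [hSmat]
    have e : (A + Xᵀ) * (A + X) = (A * A + Xᵀ * X) + (A * X + Xᵀ * A) := by noncomm_ring
    rw [e, hXX, Matrix.trace_add, Matrix.trace_add, Matrix.trace_add, hAX, hXA]
    ring
  -- sign decomposition of A - B
  have hΔherm : (A - B).IsHermitian := hA.1.sub hB.1
  obtain ⟨W, T, hWt, hWW, hWD, hDW, hTm, hTp⟩ := abs_decomp hΔherm
  -- Powers-Stormer part : trace Δ² ≤ trace (T*A) + trace (T*B)
  have hPS : Matrix.trace ((A - B) * (A - B)) ≤
      Matrix.trace (T * A) + Matrix.trace (T * B) := by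
    have h1 : 0 ≤ Matrix.trace ((T - (A - B)) * A) := psd_mul_trace_nonneg hTm hA
    have h2 : 0 ≤ Matrix.trace ((T + (A - B)) * B) := psd_mul_trace_nonneg hTp hB
    rw [Matrix.sub_mul, Matrix.trace_sub] at h1
    rw [Matrix.add_mul, Matrix.trace_add] at h2
    have h3 : Matrix.trace ((A - B) * (A - B)) =
        Matrix.trace ((A - B) * A) - Matrix.trace ((A - B) * B) := by
      rw [Matrix.mul_sub, Matrix.trace_sub]
    linarith
  -- relate trace (T*(A+B)) to trace (W * (stuff))
  have hTsum : Matrix.trace (T * A) + Matrix.trace (T * B) + (Matrix.trace (T * A) + Matrix.trace (T * B)) =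
      Matrix.trace (W * ((A + X)ᵀ * (A - X))) + Matrix.trace (W * ((A - X)ᵀ * (A + X))) := by
    have e3 : (A + X)ᵀ * (A - X) + (A - X)ᵀ * (A + X) =
        ((A - B) * (A + B)) + ((A + B) * (A - B)) := by
      rw [hDmat, hSmat]
      have : (A + Xᵀ) * (A - X) + (A - Xᵀ) * (A + X) = (A * A + A * A) - (Xᵀ * X + Xᵀ * X) := by
        noncomm_ring
      rw [this, hXX]
      noncomm_ring
    have lhs1 : Matrix.trace (W * ((A - B) * (A + B))) = Matrix.trace (T * (A + B)) := by
      rw [← Matrix.mul_assoc, hWD]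
    have lhs2 : Matrix.trace (W * ((A + B) * (A - B))) = Matrix.trace (T * (A + B)) := by
      rw [← Matrix.mul_assoc, Matrix.trace_mul_comm, ← Matrix.mul_assoc, hDW]
    have expand : Matrix.trace (W * ((A + X)ᵀ * (A - X))) + Matrix.trace (W * ((A - X)ᵀ * (A + X)))
        = Matrix.trace (T * (A + B)) + Matrix.trace (T * (A + B)) := by
      rw [← Matrix.trace_add, ← Matrix.mul_add, e3, Matrix.mul_add, Matrix.trace_add,
        lhs1, lhs2]
    rw [expand, Matrix.mul_add, Matrix.trace_add]
  -- Cauchy-Schwarz bounds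
  have hCS1 : Matrix.trace (W * ((A + X)ᵀ * (A - X))) ≤
      Real.sqrt (Matrix.trace ((A + X)ᵀ * (A + X))) *
        Real.sqrt (Matrix.trace ((A - X)ᵀ * (A - X))) := by
    have e : W * ((A + X)ᵀ * (A - X)) = ((A + X) * W)ᵀ * (A - X) := by
      rw [Matrix.transpose_mul, hWt, Matrix.mul_assoc]
    have e2 : Matrix.trace (((A + X) * W)ᵀ * ((A + X) * W)) =
        Matrix.trace ((A + X)ᵀ * (A + X)) := by
      rw [Matrix.transpose_mul, hWt]
      calc Matrix.trace (W * (A + X)ᵀ * ((A + X) * W))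
          = Matrix.trace ((W * ((A + X)ᵀ * (A + X))) * W) := by
            simp only [Matrix.mul_assoc]
        _ = Matrix.trace ((W * W) * ((A + X)ᵀ * (A + X))) := by
            rw [Matrix.trace_mul_comm, Matrix.mul_assoc]
        _ = _ := by rw [hWW, Matrix.one_mul]
    calc Matrix.trace (W * ((A + X)ᵀ * (A - X)))
        = Matrix.trace (((A + X) * W)ᵀ * (A - X)) := by rw [e]
      _ ≤ Real.sqrt (Matrix.trace (((A + X) * W)ᵀ * ((A + X) * W))) *
            Real.sqrt (Matrix.trace ((A - X)ᵀ * (A - X))) := trace_CS _ _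
      _ = _ := by rw [e2]
  have hCS2 : Matrix.trace (W * ((A - X)ᵀ * (A + X))) ≤
      Real.sqrt (Matrix.trace ((A - X)ᵀ * (A - X))) *
        Real.sqrt (Matrix.trace ((A + X)ᵀ * (A + X))) := by
    have e : W * ((A - X)ᵀ * (A + X)) = ((A - X) * W)ᵀ * (A + X) := by
      rw [Matrix.transpose_mul, hWt, Matrix.mul_assoc]
    have e2 : Matrix.trace (((A - X) * W)ᵀ * ((A - X) * W)) =
        Matrix.trace ((A - X)ᵀ * (A - X)) := by
      rw [Matrix.transpose_mul, hWt]
      calc Matrix.trace (W * (A - X)ᵀ * ((A - X) * W))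
          = Matrix.trace ((W * ((A - X)ᵀ * (A - X))) * W) := by
            simp only [Matrix.mul_assoc]
        _ = Matrix.trace ((W * W) * ((A - X)ᵀ * (A - X))) := by
            rw [Matrix.trace_mul_comm, Matrix.mul_assoc]
        _ = _ := by rw [hWW, Matrix.one_mul]
    calc Matrix.trace (W * ((A - X)ᵀ * (A + X)))
        = Matrix.trace (((A - X) * W)ᵀ * (A + X)) := by rw [e]
      _ ≤ Real.sqrt (Matrix.trace (((A - X) * W)ᵀ * ((A - X) * W))) *
            Real.sqrt (Matrix.trace ((A + X)ᵀ * (A + X))) := trace_CS _ _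
      _ = _ := by rw [e2]
  -- assemble
  rw [hnn, ← tDel]
  have final : Matrix.trace ((A - B) * (A - B)) + Matrix.trace ((A - B) * (A - B)) ≤
      Real.sqrt (Matrix.trace ((A - X)ᵀ * (A - X))) *
        Real.sqrt (Matrix.trace ((A + X)ᵀ * (A + X))) +
      Real.sqrt (Matrix.trace ((A - X)ᵀ * (A - X))) *
        Real.sqrt (Matrix.trace ((A + X)ᵀ * (A + X))) := by
    have := hTsum
    nlinarith [hPS, hCS1, hCS2, mul_comm (Real.sqrt (Matrix.trace ((A + X)ᵀ * (A + X))))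
      (Real.sqrt (Matrix.trace ((A - X)ᵀ * (A - X))))]
  have goal2 : Matrix.trace ((A - B) * (A - B)) ≤
      Real.sqrt (Matrix.trace ((A - X)ᵀ * (A - X))) *
        Real.sqrt (Matrix.trace ((A + X)ᵀ * (A + X))) := by linarith
  rw [← tD, ← tS]
  exact goal2

lemma sqrt_congr {P Q : Mat} (hP : P.PosSemidef) (hQ : Q.PosSemidef) (h : P = Q) :
    hP.sqrt = hQ.sqrt := by subst h; rfl

set_option maxHeartbeats 2000000 in
theorem nbs_cka_sqrt_bounds (M : ℕ) (Kx Ky : Matrix (Fin M) (Fin M) ℝ)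
    (hx : Kx.PosSemidef) (hy : Ky.PosSemidef) (hx0 : Kx ≠ 0) (hy0 : Ky ≠ 0) :
    1 - fidelity hx hy / Real.sqrt (Matrix.trace Kx * Matrix.trace Ky) ≤
      1 - Matrix.trace (hx.sqrt * hy.sqrt) / Real.sqrt (Matrix.trace Kx * Matrix.trace Ky) ∧
    1 - Matrix.trace (hx.sqrt * hy.sqrt) / Real.sqrt (Matrix.trace Kx * Matrix.trace Ky) ≤
      Real.sqrt (1 - (fidelity hx hy / Real.sqrt (Matrix.trace Kx * Matrix.trace Ky)) ^ 2) := by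
  classical
  set A := hx.sqrt with hAdef
  set B := hy.sqrt with hBdef
  have hA : A.PosSemidef := hx.posSemidef_sqrt
  have hB : B.PosSemidef := hy.posSemidef_sqrt
  have hAt : Aᵀ = A := hA.1
  have hBt : Bᵀ = B := hB.1
  have hAA : A * A = Kx := hx.sqrt_mul_self
  have hBB : B * B = Ky := hy.sqrt_mul_self
  -- fidelity is the nuclear norm of B * A
  have hsand : A * Ky * A = (B * A)ᵀ * (B * A) := by
    rw [← hBB, Matrix.transpose_mul, hAt, hBt]
    simp only [Matrix.mul_assoc]
  have hfid : fidelity hx hy = nuclearNorm (B * A) := by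
    exact congrArg Matrix.trace (sqrt_congr _ _ hsand)
  -- positivity of the traces
  have htrx : 0 < Matrix.trace Kx := by
    have hAne : A ≠ 0 := fun h => hx0 (by rw [← hAA, h, Matrix.mul_zero])
    obtain ⟨i, j, hij⟩ : ∃ i j, A i j ≠ 0 := by
      by_contra h
      push_neg at h
      exact hAne (Matrix.ext fun i j => h i j)
    have e : Matrix.trace Kx = ∑ p : Fin M × Fin M, A p.1 p.2 * A p.1 p.2 := by
      rw [← hAA, show A * A = Aᵀ * A by rw [hAt], trace_tmul_sum]
    rw [e]
    exact Finset.sum_pos' (fun p _ => mul_self_nonneg _)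
      ⟨(i, j), Finset.mem_univ _, mul_self_pos.mpr hij⟩
  have htry : 0 < Matrix.trace Ky := by
    have hBne : B ≠ 0 := fun h => hy0 (by rw [← hBB, h, Matrix.mul_zero])
    obtain ⟨i, j, hij⟩ : ∃ i j, B i j ≠ 0 := by
      by_contra h
      push_neg at h
      exact hBne (Matrix.ext fun i j => h i j)
    have e : Matrix.trace Ky = ∑ p : Fin M × Fin M, B p.1 p.2 * B p.1 p.2 := by
      rw [← hBB, show B * B = Bᵀ * B by rw [hBt], trace_tmul_sum]
    rw [e]
    exact Finset.sum_pos' (fun p _ => mul_self_nonneg _)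
      ⟨(i, j), Finset.mem_univ _, mul_self_pos.mpr hij⟩
  set a := Real.sqrt (Matrix.trace Kx) with hadef
  set b := Real.sqrt (Matrix.trace Ky) with hbdef
  have ha : 0 < a := Real.sqrt_pos.mpr htrx
  have hb : 0 < b := Real.sqrt_pos.mpr htry
  have ha2 : a ^ 2 = Matrix.trace Kx := Real.sq_sqrt htrx.le
  have hb2 : b ^ 2 = Matrix.trace Ky := Real.sq_sqrt htry.le
  have hs : Real.sqrt (Matrix.trace Kx * Matrix.trace Ky) = a * b :=
    Real.sqrt_mul htrx.le _
  set c := Matrix.trace (A * B) with hcdef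
  set F := fidelity hx hy with hFdef
  have hc0 : 0 ≤ c := psd_mul_trace_nonneg hA hB
  have hcF : c ≤ F := by rw [hfid]; exact trace_mul_le_nuclear A B
  have hF0 : 0 ≤ F := by rw [hfid]; exact nuclearNorm_nonneg' _
  have hFs : F ≤ a * b := by
    rw [hfid]
    have := nuclear_le_frob_mul A B hA hB
    rwa [hAA, hBB] at this
  -- scaled matrices
  have hba : (0:ℝ) ≤ b / a := (div_nonneg hb.le ha.le)
  have hab : (0:ℝ) ≤ a / b := (div_nonneg ha.le hb.le)
  set A' := Real.sqrt (b / a) • A with hA'def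
  set B' := Real.sqrt (a / b) • B with hB'def
  have hA'p : A'.PosSemidef := psd_smul' hA (Real.sqrt_nonneg _)
  have hB'p : B'.PosSemidef := psd_smul' hB (Real.sqrt_nonneg _)
  have hA'A' : A' * A' = (b / a) • (A * A) := by
    rw [hA'def, smul_mul_smul_comm, Real.mul_self_sqrt hba]
  have hB'B' : B' * B' = (a / b) • (B * B) := by
    rw [hB'def, smul_mul_smul_comm, Real.mul_self_sqrt hab]
  have hone : Real.sqrt (b / a) * Real.sqrt (a / b) = 1 := by
    rw [← Real.sqrt_mul hba]
    rw [show b / a * (a / b) = 1 by field_simp]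
    exact Real.sqrt_one
  have hone' : Real.sqrt (a / b) * Real.sqrt (b / a) = 1 := by
    rw [mul_comm]; exact hone
  have hA'B' : A' * B' = A * B := by
    rw [hA'def, hB'def, smul_mul_smul_comm, hone, one_smul]
  have hB'A' : B' * A' = B * A := by
    rw [hA'def, hB'def, smul_mul_smul_comm, hone', one_smul]
  have htA' : Matrix.trace (A' * A') = a * b := by
    rw [hA'A', Matrix.trace_smul, hAA, smul_eq_mul, ← ha2]
    field_simp
  have htB' : Matrix.trace (B' * B') = a * b := by
    rw [hB'B', Matrix.trace_smul, hBB, smul_eq_mul, ← hb2]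
    field_simp
  have hcore := core_ineq A' B' hA'p hB'p
  rw [htA', htB', hA'B', hB'A', ← hfid, ← hcdef] at hcore
  -- hcore : a*b + a*b - 2*c ≤ √(a*b + a*b - 2*F) * √(a*b + a*b + 2*F)
  have habF : (0:ℝ) ≤ a * b - F := sub_nonneg.mpr hFs
  have habF' : (0:ℝ) ≤ a * b + F := by positivity
  have hsqrt2 : Real.sqrt (a * b + a * b - 2 * F) * Real.sqrt (a * b + a * b + 2 * F)
      = 2 * (Real.sqrt (a * b - F) * Real.sqrt (a * b + F)) := by
    rw [show a * b + a * b - 2 * F = 2 * (a * b - F) by ring,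
      show a * b + a * b + 2 * F = 2 * (a * b + F) by ring,
      Real.sqrt_mul (by norm_num : (0:ℝ) ≤ 2), Real.sqrt_mul (by norm_num : (0:ℝ) ≤ 2)]
    have h2 : Real.sqrt 2 * Real.sqrt 2 = 2 := Real.mul_self_sqrt (by norm_num)
    calc Real.sqrt 2 * Real.sqrt (a*b - F) * (Real.sqrt 2 * Real.sqrt (a*b + F))
        = (Real.sqrt 2 * Real.sqrt 2) * (Real.sqrt (a*b - F) * Real.sqrt (a*b + F)) := by ring
      _ = 2 * (Real.sqrt (a*b - F) * Real.sqrt (a*b + F)) := by rw [h2]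
  have key : a * b - c ≤ Real.sqrt (a * b - F) * Real.sqrt (a * b + F) := by
    rw [hsqrt2] at hcore
    linarith
  have hprod : Real.sqrt (a * b - F) * Real.sqrt (a * b + F)
      = Real.sqrt ((a * b) ^ 2 - F ^ 2) := by
    rw [← Real.sqrt_mul habF]
    congr 1
    ring
  rw [hs]
  have hab0 : 0 < a * b := mul_pos ha hb
  constructor
  · have : c / (a * b) ≤ F / (a * b) := by gcongr
    linarith
  · have h1 : 1 - c / (a * b) = (a * b - c) / (a * b) := by field_simp
    have h2 : (a * b - c) / (a * b) ≤ Real.sqrt ((a * b) ^ 2 - F ^ 2) / (a * b) := by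
      rw [← hprod]
      gcongr
    have h3 : Real.sqrt ((a * b) ^ 2 - F ^ 2) / (a * b)
        = Real.sqrt (1 - (F / (a * b)) ^ 2) := by
      rw [show Real.sqrt ((a*b)^2 - F^2) / (a*b)
          = Real.sqrt ((a*b)^2 - F^2) / Real.sqrt ((a*b)^2) by
            rw [Real.sqrt_sq hab0.le],
        ← Real.sqrt_div (by nlinarith : (0:ℝ) ≤ (a*b)^2 - F^2)]
      congr 1
      field_simp
    rw [h1]
    rw [← h3]
    exact h2
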